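/- Let Γ ∈ 𝔽₂^{(2n-1)×n} satisfy: Γ_{i,j} = δ_{i,j} for 0 ≤ i ≤ n−1; Γ_{n,0} = 1; and Γ_{i+1,0} = Γ_{i,n-1}, Γ_{i+1,j} = Γ_{i,j-1} + Γ_{n,j}·Γ_{i,n-1} for j ≥ 1 and n ≤ i ≤ 2n−3. Let M⁰ be the n×n matrix with [M⁰]_{p,q} = Γ_{p+q,0}. Then the (2n−1)×n matrix M = Γ·M⁰ is Hankel in the sense that M_{i,j} = M_{i-1,j+1} for all valid indices i ≥ 1, j ≤ n−2. -/
import Mathlib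


open Matrix Finset

noncomputable section

/-- let `Γ ∈ 𝔽₂^{(2n-1)×n}` satisfy `Γ_{i,j} = δ_{i,j}` for `i ≤ n−1`,
`Γ_{n,0} = 1`, and the recursions `Γ_{i+1,0} = Γ_{i,n-1}`,
`Γ_{i+1,j} = Γ_{i,j-1} + Γ_{n,j}·Γ_{i,n-1}` (for `j ≥ 1`, `n ≤ i ≤ 2n−3`).
With `[M⁰]_{p,q} = Γ_{p+q,0}`, the matrix `M = Γ·M⁰` is Hankel:
`M_{i,j} = M_{i-1,j+1}` for all valid indices. -/
theorem stmt9 (n : ℕ) (hn : 2 ≤ n)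
    (Γ : Matrix (Fin (2 * n - 1)) (Fin n) (ZMod 2))
    (h1 : ∀ i j : Fin n,
      Γ ⟨(i : ℕ), by have := i.isLt; omega⟩ j = if (i : ℕ) = (j : ℕ) then 1 else 0)
    (h2 : Γ ⟨n, by omega⟩ ⟨0, by omega⟩ = 1)
    (h3 : ∀ i : ℕ, ∀ _ : n ≤ i, ∀ _ : i ≤ 2 * n - 3,
      Γ ⟨i + 1, by omega⟩ ⟨0, by omega⟩ = Γ ⟨i, by omega⟩ ⟨n - 1, by omega⟩)
    (h4 : ∀ i : ℕ, ∀ _ : n ≤ i, ∀ _ : i ≤ 2 * n - 3, ∀ j : Fin n, ∀ _ : 1 ≤ (j : ℕ),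
      Γ ⟨i + 1, by omega⟩ j =
        Γ ⟨i, by omega⟩ ⟨(j : ℕ) - 1, by have := j.isLt; omega⟩ +
          Γ ⟨n, by omega⟩ j * Γ ⟨i, by omega⟩ ⟨n - 1, by omega⟩) :
    ∀ (i : Fin (2 * n - 1)) (j : Fin n), ∀ _ : 1 ≤ (i : ℕ), ∀ _ : (j : ℕ) ≤ n - 2,
      (Γ * Matrix.of fun p q : Fin n =>
          Γ ⟨(p : ℕ) + (q : ℕ), by have := p.isLt; have := q.isLt; omega⟩ ⟨0, by omega⟩) i j
        = (Γ * Matrix.of fun p q : Fin n =>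
            Γ ⟨(p : ℕ) + (q : ℕ), by have := p.isLt; have := q.isLt; omega⟩ ⟨0, by omega⟩)
            ⟨(i : ℕ) - 1, by have := i.isLt; omega⟩ ⟨(j : ℕ) + 1, by have := j.isLt; omega⟩ := by
  intro i j hi1 hjle
  set G : ℕ → ℕ → ZMod 2 := fun a b =>
    if h : a < 2 * n - 1 ∧ b < n then Γ ⟨a, h.1⟩ ⟨b, h.2⟩ else 0 with hGdef
  have hGval : ∀ (a b : ℕ) (ha : a < 2 * n - 1) (hb : b < n),
      G a b = Γ ⟨a, ha⟩ ⟨b, hb⟩ := by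
    intro a b ha hb
    simp only [hGdef]
    rw [dif_pos ⟨ha, hb⟩]
  have hG1 : ∀ a b : ℕ, a < n → b < n → G a b = if a = b then 1 else 0 := by
    intro a b ha hb
    rw [hGval a b (by omega) hb]
    exact h1 ⟨a, ha⟩ ⟨b, hb⟩
  have hGn0 : G n 0 = 1 := by rw [hGval n 0 (by omega) (by omega)]; exact h2
  have hR : ∀ a b : ℕ, a < 2 * n - 2 → b < n →
      G (a + 1) b = (if b = 0 then 0 else G a (b - 1)) + G n b * G a (n - 1) := by
    intro a b ha hb
    rcases lt_trichotomy (a + 1) n with hc | hc | hc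
    · rw [hG1 (a + 1) b (by omega) hb, hG1 a (n - 1) (by omega) (by omega),
        if_neg (by omega : a ≠ n - 1), mul_zero, add_zero]
      by_cases hb0 : b = 0
      · subst hb0; rw [if_pos rfl, if_neg (by omega)]
      · rw [if_neg hb0, hG1 a (b - 1) (by omega) (by omega)]
        by_cases h' : a + 1 = b
        · rw [if_pos h', if_pos (by omega)]
        · rw [if_neg h', if_neg (by omega)]
    · have ha' : a = n - 1 := by omega
      subst ha'
      rw [show n - 1 + 1 = n from by omega, hG1 (n - 1) (n - 1) (by omega) (by omega),
        if_pos rfl, mul_one]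
      by_cases hb0 : b = 0
      · subst hb0; rw [if_pos rfl, zero_add]
      · rw [if_neg hb0, hG1 (n - 1) (b - 1) (by omega) (by omega),
          if_neg (by omega), zero_add]
    · by_cases hb0 : b = 0
      · subst hb0
        rw [if_pos rfl, hGn0, one_mul, zero_add,
          hGval (a + 1) 0 (by omega) (by omega), hGval a (n - 1) (by omega) (by omega)]
        exact h3 a (by omega) (by omega)
      · rw [if_neg hb0, hGval (a + 1) b (by omega) hb,
          hGval a (b - 1) (by omega) (by omega), hGval n b (by omega) hb,
          hGval a (n - 1) (by omega) (by omega)]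
        exact h4 a (by omega) (by omega) ⟨b, hb⟩ (by simpa using Nat.one_le_iff_ne_zero.mpr hb0)
  have hD : ∀ d, d ≤ n - 2 → ∀ b, b < n →
      G (n + d) b = ∑ k ∈ Finset.range n, G n k * G (k + d) b := by
    intro d
    induction d with
    | zero =>
        intro _ b hb
        rw [Finset.sum_eq_single b]
        · rw [Nat.add_zero, Nat.add_zero, hG1 b b hb hb, if_pos rfl, mul_one]
        · intro k hk hkb
          rw [Nat.add_zero, hG1 k b (Finset.mem_range.mp hk) hb, if_neg hkb, mul_zero]
        · intro hb'; exact absurd (Finset.mem_range.mpr hb) hb'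
    | succ d ih =>
        intro hd b hb
        have ih' := ih (by omega)
        have e1 : ∀ k ∈ Finset.range n,
            G n k * G (k + (d + 1)) b =
              G n k * ((if b = 0 then 0 else G (k + d) (b - 1)) + G n b * G (k + d) (n - 1)) := by
          intro k hk
          have hk' := Finset.mem_range.mp hk
          rw [show k + (d + 1) = (k + d) + 1 from by omega, hR (k + d) b (by omega) hb]
        rw [Finset.sum_congr rfl e1]
        rw [show n + (d + 1) = (n + d) + 1 from by omega, hR (n + d) b (by omega) hb]
        simp only [mul_add, Finset.sum_add_distrib]
        congr 1
        · by_cases hb0 : b = 0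
          · simp [hb0]
          · rw [if_neg hb0, ih' (b - 1) (by omega)]
            exact Finset.sum_congr rfl fun k _ => by rw [if_neg hb0]
        · rw [ih' (n - 1) (by omega), Finset.mul_sum]
          apply Finset.sum_congr rfl
          intro k _
          ring
  have key : ∀ a : ℕ, 1 ≤ a → a < 2 * n - 1 → ∀ c : ℕ, c ≤ n - 2 →
      ∑ k ∈ Finset.range n, G a k * G (k + c) 0 =
        ∑ k ∈ Finset.range n, G (a - 1) k * G (k + (c + 1)) 0 := by
    intro a ha1 ha2 c hc
    obtain ⟨a0, rfl⟩ : ∃ a0, a = a0 + 1 := ⟨a - 1, by omega⟩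
    rw [Nat.add_sub_cancel]
    have e1 : ∀ k ∈ Finset.range n,
        G (a0 + 1) k * G (k + c) 0 =
          ((if k = 0 then 0 else G a0 (k - 1)) + G n k * G a0 (n - 1)) * G (k + c) 0 := by
      intro k hk
      rw [hR a0 k (by omega) (Finset.mem_range.mp hk)]
    rw [Finset.sum_congr rfl e1]
    simp only [add_mul, Finset.sum_add_distrib]
    have e2 : ∑ k ∈ Finset.range n, G n k * G a0 (n - 1) * G (k + c) 0 =
        G a0 (n - 1) * G (n + c) 0 := by
      rw [hD c hc 0 (by omega), Finset.mul_sum]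
      apply Finset.sum_congr rfl
      intro k _
      ring
    rw [e2]
    have e3 : ∑ k ∈ Finset.range n, (if k = 0 then 0 else G a0 (k - 1)) * G (k + c) 0 =
        ∑ k ∈ Finset.range (n - 1), G a0 k * G (k + 1 + c) 0 := by
      rw [show n = (n - 1) + 1 from by omega, Finset.sum_range_succ']
      simp
    rw [e3]
    rw [show n = (n - 1) + 1 from by omega, Finset.sum_range_succ,
      show n - 1 + 1 = n from by omega]
    congr 1
    · apply Finset.sum_congr rfl
      intro k _
      rw [show k + 1 + c = k + (c + 1) from by omega]
    · rw [show n - 1 + (c + 1) = n + c from by omega]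
  have trans : ∀ (a : ℕ) (ha : a < 2 * n - 1) (c : ℕ) (hc : c < n),
      (Γ * Matrix.of fun p q : Fin n =>
          Γ ⟨(p : ℕ) + (q : ℕ), by have := p.isLt; have := q.isLt; omega⟩ ⟨0, by omega⟩)
          ⟨a, ha⟩ ⟨c, hc⟩ =
        ∑ k ∈ Finset.range n, G a k * G (k + c) 0 := by
    intro a ha c hc
    rw [Matrix.mul_apply, Finset.sum_range fun k => G a k * G (k + c) 0]
    apply Finset.sum_congr rfl
    intro k _
    rw [Matrix.of_apply, hGval a k ha k.isLt, hGval (k + c) 0 (by omega) (by omega)]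
  have L := trans (i : ℕ) i.isLt (j : ℕ) j.isLt
  have R := trans ((i : ℕ) - 1) (by have := i.isLt; omega) ((j : ℕ) + 1)
    (by have := j.isLt; omega)
  calc (Γ * Matrix.of fun p q : Fin n =>
          Γ ⟨(p : ℕ) + (q : ℕ), by have := p.isLt; have := q.isLt; omega⟩ ⟨0, by omega⟩) i j
      = ∑ k ∈ Finset.range n, G (i : ℕ) k * G (k + (j : ℕ)) 0 := L
    _ = ∑ k ∈ Finset.range n, G ((i : ℕ) - 1) k * G (k + ((j : ℕ) + 1)) 0 :=
        key (i : ℕ) hi1 i.isLt (j : ℕ) hjle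
    _ = _ := R.symm
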